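/- Let G = H *_φ K be the free product of H and K amalgamated over central subgroups A ≤ Z(H) and B ≤ Z(K) via an isomorphism φ : A → B. If x and y are cyclically reduced elements of G of length greater than 1 whose syllable lengths are equal, then x and y are conjugate in G if and only if y equals some cyclic permutation of x. -/

import Mathlib

/-- `G` together with `ιH, ιK` is the pushout of `f : A →* H` and `g : A →* K`,
characterized by its universal property. -/
def IsPushout {A H K G : Type} [Group A] [Group H] [Group K] [Group G]
    (f : A →* H) (g : A →* K) (ιH : H →* G) (ιK : K →* G) : Prop :=
  (∀ a : A, ιH (f a) = ιK (g a)) ∧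
  ∀ (X : Type) [Group X], ∀ (fH : H →* X) (fK : K →* X),
    (∀ a : A, fH (f a) = fK (g a)) →
      ∃! ρ : G →* X, ρ.comp ιH = fH ∧ ρ.comp ιK = fK

/-- `G` together with `ιH, ιK` is the free product of `H` and `K` with the subgroups
`A ≤ H` and `B ≤ K` amalgamated via the isomorphism `φ : A ≃* B`. -/
def IsAmalgam {H K G : Type} [Group H] [Group K] [Group G]
    (A : Subgroup H) (B : Subgroup K) (φ : A ≃* B)
    (ιH : H →* G) (ιK : K →* G) : Prop :=
  IsPushout A.subtype (B.subtype.comp φ.toMonoidHom) ιH ιK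

/-- The element of `G` represented by a list of syllables from the factors `H`, `K`. -/
def prodOf {H K G : Type} [Group H] [Group K] [Group G]
    (ιH : H →* G) (ιK : K →* G) (L : List (H ⊕ K)) : G :=
  (L.map (Sum.elim (fun h => ιH h) (fun k => ιK k))).prod

/-- A nonempty list of syllables is a reduced form: consecutive syllables come from
different factors, and if the length exceeds `1` no syllable lies in the amalgamated
subgroups `A`, `B`. -/
def Reduced {H K : Type} [Group H] [Group K] (A : Subgroup H) (B : Subgroup K)
    (L : List (H ⊕ K)) : Prop :=
  L ≠ [] ∧ L.Chain' (fun x y => x.isLeft ≠ y.isLeft) ∧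
  (1 < L.length → ∀ s ∈ L,
    (∀ h, s = Sum.inl h → h ∉ A) ∧ (∀ k, s = Sum.inr k → k ∉ B))

/-- A reduced form is cyclically reduced if it has length `1`, or its first and last
syllables come from different factors. -/
def CyclicallyReduced {H K : Type} [Group H] [Group K] (A : Subgroup H) (B : Subgroup K)
    (L : List (H ⊕ K)) : Prop :=
  Reduced A B L ∧ (1 < L.length → ∃ x y, L.head? = some x ∧ L.getLast? = some y ∧
    x.isLeft ≠ y.isLeft)


namespace AmalgamConj

variable {H K G : Type} [Group H] [Group K] [Group G]

/-- syllable lies in the amalgamated subgroup -/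
def InAmalg (A : Subgroup H) (B : Subgroup K) : H ⊕ K → Prop :=
  Sum.elim (· ∈ A) (· ∈ B)

/-- image of a syllable in `G` -/
def syl (ιH : H →* G) (ιK : K →* G) : H ⊕ K → G :=
  Sum.elim (fun h => ιH h) (fun k => ιK k)

/-- product of two syllables on the same side -/
def sprod : H ⊕ K → H ⊕ K → H ⊕ K
  | .inl a, .inl b => .inl (a * b)
  | .inr a, .inr b => .inr (a * b)
  | s, _ => s

/-- inverse of a syllable -/
def sinv : H ⊕ K → H ⊕ K := Sum.map (·⁻¹) (·⁻¹)

/-- the inverse word -/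
def invRev (L : List (H ⊕ K)) : List (H ⊕ K) := (L.map sinv).reverse

/-- strongly reduced (possibly empty) word -/
def SRed (A : Subgroup H) (B : Subgroup K) (L : List (H ⊕ K)) : Prop :=
  L.Chain' (fun x y => x.isLeft ≠ y.isLeft) ∧ ∀ s ∈ L, ¬ InAmalg A B s

section Syl

variable {A : Subgroup H} {B : Subgroup K} (ιH : H →* G) (ιK : K →* G)

theorem prodOf_eq (L : List (H ⊕ K)) :
    prodOf ιH ιK L = (L.map (syl ιH ιK)).prod := rfl

@[simp] theorem prodOf_nil : prodOf ιH ιK ([] : List (H ⊕ K)) = 1 := rfl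

theorem prodOf_cons (s : H ⊕ K) (L : List (H ⊕ K)) :
    prodOf ιH ιK (s :: L) = syl ιH ιK s * prodOf ιH ιK L := by
  simp [prodOf_eq]

theorem prodOf_append (L₁ L₂ : List (H ⊕ K)) :
    prodOf ιH ιK (L₁ ++ L₂) = prodOf ιH ιK L₁ * prodOf ιH ιK L₂ := by
  simp [prodOf_eq]

theorem prodOf_singleton (s : H ⊕ K) : prodOf ιH ιK [s] = syl ιH ιK s := by
  simp [prodOf_eq]

@[simp] theorem syl_sinv (s : H ⊕ K) :
    syl ιH ιK (sinv s) = (syl ιH ιK s)⁻¹ := by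
  cases s <;> simp [syl, sinv]

@[simp] theorem isLeft_sinv (s : H ⊕ K) : (sinv s).isLeft = s.isLeft := by
  cases s <;> rfl

@[simp] theorem isLeft_sprod (s t : H ⊕ K) : (sprod s t).isLeft = s.isLeft := by
  cases s <;> cases t <;> rfl

theorem syl_sprod {s t : H ⊕ K} (h : s.isLeft = t.isLeft) :
    syl ιH ιK (sprod s t) = syl ιH ιK s * syl ιH ιK t := by
  cases s <;> cases t <;> simp_all [syl, sprod]

theorem sprod_sinv_left {s t : H ⊕ K} (h : s.isLeft = t.isLeft) :
    sprod (sinv s) (sprod s t) = t := by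
  cases s <;> cases t <;> simp_all [sinv, sprod]

theorem sprod_sinv_right {s t : H ⊕ K} (h : t.isLeft = s.isLeft) :
    sprod (sprod t (sinv s)) s = t := by
  cases s <;> cases t <;> simp_all [sinv, sprod]

theorem prodOf_invRev (L : List (H ⊕ K)) :
    prodOf ιH ιK (invRev L) = (prodOf ιH ιK L)⁻¹ := by
  induction L with
  | nil => simp [invRev]
  | cons s L ih =>
    rw [prodOf_cons, mul_inv_rev, ← ih]
    simp only [invRev, List.map_cons, List.reverse_cons]
    rw [prodOf_append, prodOf_singleton, syl_sinv]

theorem invRev_concat (L : List (H ⊕ K)) (s : H ⊕ K) :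
    invRev (L ++ [s]) = sinv s :: invRev L := by
  simp [invRev]

@[simp] theorem inAmalg_sinv {s : H ⊕ K} :
    InAmalg A B (sinv s) ↔ InAmalg A B s := by
  cases s <;> simp [InAmalg, sinv]

theorem inAmalg_sprod {a t : H ⊕ K} (ha : InAmalg A B a) (h : a.isLeft = t.isLeft) :
    (InAmalg A B (sprod a t) ↔ InAmalg A B t) := by
  cases a <;> cases t <;> simp_all [InAmalg, sprod, mul_mem_cancel_left]

theorem chain'_invRev {L : List (H ⊕ K)} (h : L.Chain' (fun x y => x.isLeft ≠ y.isLeft)) :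
    (invRev L).Chain' (fun x y => x.isLeft ≠ y.isLeft) := by
  simp only [List.Chain'] at h ⊢
  rw [invRev, List.isChain_reverse, List.isChain_map]
  refine h.imp ?_
  intro a b hab
  simp only [flip, isLeft_sinv]
  exact fun hba => hab hba.symm

theorem SRed.invRev {L : List (H ⊕ K)} (h : SRed A B L) : SRed A B (AmalgamConj.invRev L) := by
  refine ⟨chain'_invRev h.1, ?_⟩
  intro s hs
  simp only [AmalgamConj.invRev, List.mem_reverse, List.mem_map] at hs
  obtain ⟨t, ht, rfl⟩ := hs
  simpa using h.2 t ht

theorem head?_invRev (L : List (H ⊕ K)) :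
    (invRev L).head? = L.getLast?.map sinv := by
  rw [invRev, List.head?_reverse, List.getLast?_map]

end Syl


section Amalgam

variable {A : Subgroup H} {B : Subgroup K} {φ : A ≃* B}
variable {ιH : H →* G} {ιK : K →* G}

theorem compat (hG : IsAmalgam A B φ ιH ιK) (a : A) : ιH a = ιK (φ a) := hG.1 a

theorem mem_closure_ranges (hG : IsAmalgam A B φ ιH ιK) (g : G) :
    g ∈ Subgroup.closure (Set.range ιH ∪ Set.range ιK) := by
  set S : Subgroup G := Subgroup.closure (Set.range ιH ∪ Set.range ιK) with hS
  have hHmem : ∀ h : H, ιH h ∈ S := fun h =>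
    Subgroup.subset_closure (Or.inl ⟨h, rfl⟩)
  have hKmem : ∀ k : K, ιK k ∈ S := fun k =>
    Subgroup.subset_closure (Or.inr ⟨k, rfl⟩)
  obtain ⟨ρ, ⟨hρH, hρK⟩, -⟩ := hG.2 S (ιH.codRestrict S hHmem) (ιK.codRestrict S hKmem)
    (fun a => Subtype.ext (hG.1 a))
  obtain ⟨ρ₀, hρ₀, huniq⟩ := hG.2 G ιH ιK hG.1
  have h1 : S.subtype.comp ρ = MonoidHom.id G := by
    have e1 : S.subtype.comp ρ = ρ₀ := huniq _ ⟨by rw [MonoidHom.comp_assoc, hρH]; rfl,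
      by rw [MonoidHom.comp_assoc, hρK]; rfl⟩
    have e2 : MonoidHom.id G = ρ₀ := huniq _ ⟨by ext x; rfl, by ext x; rfl⟩
    rw [e1, e2]
  have : S.subtype (ρ g) = g := by
    rw [← MonoidHom.comp_apply, h1]; rfl
  rw [← this]
  exact (ρ g).2

theorem transport (hG : IsAmalgam A B φ ιH ιK) {u : H ⊕ K} (hu : InAmalg A B u) (b : Bool) :
    ∃ u', u'.isLeft = b ∧ InAmalg A B u' ∧ syl ιH ιK u' = syl ιH ιK u := by
  cases u with
  | inl a =>
    cases b with
    | true => exact ⟨Sum.inl a, rfl, hu, rfl⟩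
    | false =>
      refine ⟨Sum.inr (φ ⟨a, hu⟩ : B), rfl, (φ ⟨a, hu⟩).2, ?_⟩
      simpa [syl] using (hG.1 ⟨a, hu⟩).symm
  | inr k =>
    cases b with
    | false => exact ⟨Sum.inr k, rfl, hu, rfl⟩
    | true =>
      have hu' : k ∈ B := hu
      refine ⟨Sum.inl (φ.symm ⟨k, hu'⟩ : A), rfl, (φ.symm ⟨k, hu'⟩).2, ?_⟩
      have := hG.1 (φ.symm ⟨k, hu'⟩)
      simp only [MonoidHom.comp_apply, MulEquiv.coe_toMonoidHom, MulEquiv.apply_symm_apply] at this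
      simpa [syl] using this

theorem commute_syl (hG : IsAmalgam A B φ ιH ιK) (hA : A ≤ Subgroup.center H)
    (hB : B ≤ Subgroup.center K) {u : H ⊕ K} (hu : InAmalg A B u) (g : G) :
    Commute (syl ιH ιK u) g := by
  have hgen : ∀ x ∈ (Set.range ιH ∪ Set.range ιK : Set G), Commute (syl ιH ιK u) x := by
    rintro x (⟨h, rfl⟩ | ⟨k, rfl⟩)
    · obtain ⟨u', hb, hu', hsyl⟩ := transport hG hu true
      obtain ⟨a, rfl⟩ : ∃ a : H, u' = Sum.inl a := by
        cases u' with
        | inl a => exact ⟨a, rfl⟩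
        | inr b' => simp at hb
      rw [← hsyl]
      show Commute (ιH a) (ιH h)
      have := Subgroup.mem_center_iff.1 (hA hu') h
      unfold Commute SemiconjBy
      rw [← map_mul, ← map_mul, this]
    · obtain ⟨u', hb, hu', hsyl⟩ := transport hG hu false
      obtain ⟨b', rfl⟩ : ∃ b' : K, u' = Sum.inr b' := by
        cases u' with
        | inl a => simp at hb
        | inr b' => exact ⟨b', rfl⟩
      rw [← hsyl]
      show Commute (ιK b') (ιK k)
      have := Subgroup.mem_center_iff.1 (hB hu') k
      unfold Commute SemiconjBy
      rw [← map_mul, ← map_mul, this]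
  have hg := mem_closure_ranges hG g
  induction hg using Subgroup.closure_induction with
  | mem x hx => exact hgen x hx
  | one => exact Commute.one_right _
  | mul x y hx hy ihx ihy => exact ihx.mul_right ihy
  | inv x hx ih => exact ih.inv_right

/-- Every element is a central amalgam element or the product of a
nonempty strongly reduced word. -/
def Decomp (A : Subgroup H) (B : Subgroup K) (ιH : H →* G) (ιK : K →* G) (g : G) : Prop :=
  (∃ u, InAmalg A B u ∧ g = syl ιH ιK u) ∨
    (∃ L, L ≠ [] ∧ SRed A B L ∧ g = prodOf ιH ιK L)

theorem decomp_one : Decomp A B ιH ιK 1 :=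
  Or.inl ⟨Sum.inl 1, A.one_mem, by simp [syl]⟩

theorem decomp_syl_mul (hG : IsAmalgam A B φ ιH ιK) (s : H ⊕ K) {g : G}
    (hg : Decomp A B ιH ιK g) : Decomp A B ιH ιK (syl ιH ιK s * g) := by
  rcases hg with ⟨u, hu, rfl⟩ | ⟨L, hne, ⟨hch, hmem⟩, rfl⟩
  · -- g is a central amalgam element
    obtain ⟨u', hb, hu', hsyl⟩ := transport hG hu s.isLeft
    rw [← hsyl, ← syl_sprod ιH ιK hb.symm]
    by_cases hv : InAmalg A B (sprod s u')
    · exact Or.inl ⟨_, hv, rfl⟩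
    · exact Or.inr ⟨[sprod s u'], by simp, ⟨List.isChain_singleton _, by simpa using hv⟩,
        (prodOf_singleton ιH ιK _).symm⟩
  · -- g = prodOf L, L = t :: L'
    obtain ⟨t, L', rfl⟩ := List.exists_cons_of_ne_nil hne
    have htmem : ¬ InAmalg A B t := hmem t List.mem_cons_self
    by_cases hst : s.isLeft = t.isLeft
    · set v := sprod s t with hv
      have hsylv : syl ιH ιK v = syl ιH ιK s * syl ιH ιK t := syl_sprod ιH ιK hst
      by_cases hav : InAmalg A B v
      · -- syl s * g = syl v * prodOf L'
        rcases L' with _ | ⟨t', L''⟩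
        · refine Or.inl ⟨v, hav, ?_⟩
          rw [prodOf_cons, prodOf_nil, mul_one, ← hsylv]
        · -- absorb v into t'
          have htt' : t.isLeft ≠ t'.isLeft := (List.isChain_cons_cons.1 hch).1
          obtain ⟨v', hb, hv', hsylv'⟩ := transport hG hav t'.isLeft
          have hw : ¬ InAmalg A B (sprod v' t') := by
            rw [inAmalg_sprod hv' hb]
            exact hmem t' (by simp)
          refine Or.inr ⟨sprod v' t' :: L'', by simp, ?_, ?_⟩
          · constructor
            · have h2 := List.isChain_cons.1 (List.isChain_cons.1 hch).2
              simp only [List.Chain']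
              rw [List.isChain_cons]
              refine ⟨fun y hy => ?_, h2.2⟩
              have := h2.1 y hy
              simpa [hb] using this
            · intro z hz
              rcases List.mem_cons.1 hz with rfl | hz'
              · exact hw
              · exact hmem z (by simp [hz'])
          · rw [prodOf_cons, prodOf_cons, prodOf_cons, syl_sprod ιH ιK hb, hsylv', hsylv]
            group
      · refine Or.inr ⟨v :: L', by simp, ⟨?_, ?_⟩, ?_⟩
        · simp only [List.Chain'] at hch ⊢
          rw [List.isChain_cons] at hch ⊢
          refine ⟨?_, hch.2⟩
          intro y hy
          have := hch.1 y hy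
          simpa [hv, hst] using this
        · intro z hz
          rcases List.mem_cons.1 hz with rfl | hz'
          · exact hav
          · exact hmem z (by simp [hz'])
        · rw [prodOf_cons, prodOf_cons, hsylv, mul_assoc]
    · -- different sides
      by_cases has : InAmalg A B s
      · obtain ⟨s', hb, hs', hsyls⟩ := transport hG has t.isLeft
        have hw : ¬ InAmalg A B (sprod s' t) := by
          rw [inAmalg_sprod hs' hb]; exact htmem
        refine Or.inr ⟨sprod s' t :: L', by simp, ⟨?_, ?_⟩, ?_⟩
        · simp only [List.Chain'] at hch ⊢
          rw [List.isChain_cons] at hch ⊢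
          refine ⟨?_, hch.2⟩
          intro y hy
          have := hch.1 y hy
          simpa [hb] using this
        · intro z hz
          rcases List.mem_cons.1 hz with rfl | hz'
          · exact hw
          · exact hmem z (by simp [hz'])
        · rw [prodOf_cons, prodOf_cons, syl_sprod ιH ιK hb, hsyls, mul_assoc]
      · refine Or.inr ⟨s :: t :: L', by simp, ⟨?_, ?_⟩, ?_⟩
        · simp only [List.Chain']
          rw [List.isChain_cons_cons]
          exact ⟨hst, hch⟩
        · intro z hz
          rcases List.mem_cons.1 hz with rfl | hz'
          · exact has
          · exact hmem z hz'
        · rw [prodOf_cons, prodOf_cons]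
          rw [prodOf_cons]
      
theorem decomp (hG : IsAmalgam A B φ ιH ιK) (g : G) : Decomp A B ιH ιK g := by
  have hg := mem_closure_ranges hG g
  induction hg using Subgroup.closure_induction_left with
  | one => exact decomp_one
  | mul_left x hx y hy ih =>
    rcases hx with ⟨h, rfl⟩ | ⟨k, rfl⟩
    · exact decomp_syl_mul hG (Sum.inl h) ih
    · exact decomp_syl_mul hG (Sum.inr k) ih
  | inv_mul_cancel x hx y hy ih =>
    rcases hx with ⟨h, rfl⟩ | ⟨k, rfl⟩
    · have : (ιH h)⁻¹ = syl ιH ιK (Sum.inl h⁻¹) := by simp [syl]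
      rw [this]; exact decomp_syl_mul hG _ ih
    · have : (ιK k)⁻¹ = syl ιH ιK (Sum.inr k⁻¹) := by simp [syl]
      rw [this]; exact decomp_syl_mul hG _ ih

end Amalgam


section Model

/-- The two factor groups indexed by `Bool`. -/
def Fc (H K : Type) : Bool → Type
  | true => H
  | false => K

instance instGroupFc : ∀ b, Group (Fc H K b)
  | true => (inferInstance : Group H)
  | false => (inferInstance : Group K)

/-- The diagram maps for the pushout model. -/
def fφ (A : Subgroup H) (B : Subgroup K) (φ : A ≃* B) : ∀ b, ↥A →* Fc H K b
  | true => A.subtype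
  | false => B.subtype.comp φ.toMonoidHom

theorem fφ_injective (A : Subgroup H) (B : Subgroup K) (φ : A ≃* B) :
    ∀ b, Function.Injective (fφ A B φ b)
  | true => A.subtype_injective
  | false => B.subtype_injective.comp φ.injective

/-- Conversion of syllables. -/
def cv : H ⊕ K → Σ b, Fc H K b := Sum.elim (fun h => ⟨true, h⟩) (fun k => ⟨false, k⟩)

theorem cv_fst (s : H ⊕ K) : (cv (H := H) (K := K) s).fst = s.isLeft := by
  cases s <;> rfl

variable (A : Subgroup H) (B : Subgroup K) (φ : A ≃* B)

/-- The model pushout. -/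
def P (A : Subgroup H) (B : Subgroup K) (φ : A ≃* B) : Type :=
  Monoid.PushoutI (fφ A B φ)

instance : Group (P A B φ) := by unfold P; infer_instance

/-- inclusion of `H` into the model. -/
def ofH : H →* P A B φ := Monoid.PushoutI.of (φ := fφ A B φ) true

/-- inclusion of `K` into the model. -/
def ofK : K →* P A B φ := Monoid.PushoutI.of (φ := fφ A B φ) false

variable {A B φ}

/-- The `CoprodI.Word` associated to a strongly reduced nonempty word. -/
def toW (L : List (H ⊕ K)) (hr : SRed A B L) : Monoid.CoprodI.Word (Fc H K) where
  toList := L.map cv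
  ne_one := by
    intro l hl
    obtain ⟨s, hs, rfl⟩ := List.mem_map.1 hl
    have hna := hr.2 s hs
    cases s with
    | inl h =>
      intro h1
      apply hna
      show h ∈ A
      have : h = (1 : H) := h1
      rw [this]; exact A.one_mem
    | inr k =>
      intro h1
      apply hna
      show k ∈ B
      have : k = (1 : K) := h1
      rw [this]; exact B.one_mem
  chain_ne := by
    rw [List.isChain_map]
    refine List.IsChain.imp ?_ hr.1
    intro a b hab
    rw [cv_fst, cv_fst]
    exact fun h => hab (by simpa using h)

theorem toW_reduced (L : List (H ⊕ K)) (hr : SRed A B L) :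
    Monoid.PushoutI.Reduced (fφ A B φ) (toW L hr) := by
  intro g hg
  obtain ⟨s, hs, rfl⟩ := List.mem_map.1 hg
  have hna := hr.2 s hs
  cases s with
  | inl h =>
    rintro ⟨a, ha⟩
    apply hna
    show h ∈ A
    have h2 : (A.subtype a : H) = h := ha
    rw [← h2]; exact a.2
  | inr k =>
    rintro ⟨a, ha⟩
    apply hna
    show k ∈ B
    have h2 : ((φ a : ↥B) : K) = k := ha
    rw [← h2]; exact (φ a).2

theorem toW_prod (L : List (H ⊕ K)) (hr : SRed A B L) :
    Monoid.PushoutI.ofCoprodI ((toW L hr).prod : Monoid.CoprodI (Fc H K)) =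
      prodOf (ofH A B φ) (ofK A B φ) L := by
  show Monoid.PushoutI.ofCoprodI
      (List.prod (((toW L hr).toList).map fun l => Monoid.CoprodI.of l.snd)) = _
  rw [map_list_prod]
  show _ = (L.map (syl _ _)).prod
  rw [show (toW L hr).toList = L.map cv from rfl, List.map_map, List.map_map]
  congr 1
  apply List.map_congr_left
  intro s _
  cases s with
  | inl h =>
    exact Monoid.PushoutI.ofCoprodI_of (φ := fφ A B φ) true h
  | inr k =>
    exact Monoid.PushoutI.ofCoprodI_of (φ := fφ A B φ) false k

theorem model_length {L₁ L₂ : List (H ⊕ K)} (h₁ : SRed A B L₁) (h₂ : SRed A B L₂)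
    (hp : prodOf (ofH A B φ) (ofK A B φ) L₁ = prodOf (ofH A B φ) (ofK A B φ) L₂) :
    L₁.length = L₂.length := by
  obtain ⟨d⟩ := Monoid.PushoutI.NormalWord.transversal_nonempty (fφ A B φ) (fφ_injective A B φ)
  obtain ⟨w₁, hw₁p, hw₁m⟩ := (toW_reduced L₁ h₁).exists_normalWord_prod_eq d
  obtain ⟨w₂, hw₂p, hw₂m⟩ := (toW_reduced L₂ h₂).exists_normalWord_prod_eq d
  have hw : w₁ = w₂ := by
    apply Monoid.PushoutI.NormalWord.prod_injective
    rw [hw₁p, hw₂p, toW_prod L₁ h₁, toW_prod L₂ h₂, hp]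
  have hm : (toW (A := A) (B := B) L₁ h₁).toList.map Sigma.fst =
      (toW (A := A) (B := B) L₂ h₂).toList.map Sigma.fst := by
    rw [← hw₁m, ← hw₂m, hw]
  have := congrArg List.length hm
  simpa [toW] using this

variable {ιH : H →* G} {ιK : K →* G}

/-- length is well defined for strongly reduced words. -/
theorem length_eq (hG : IsAmalgam A B φ ιH ιK)
    {L₁ L₂ : List (H ⊕ K)} (h₁ : SRed A B L₁) (h₂ : SRed A B L₂)
    (hp : prodOf ιH ιK L₁ = prodOf ιH ιK L₂) : L₁.length = L₂.length := by
  obtain ⟨ρ, ⟨hρH, hρK⟩, -⟩ := hG.2 (P A B φ) (ofH A B φ) (ofK A B φ)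
    (fun a => by
      show Monoid.PushoutI.of (φ := fφ A B φ) true ((fφ A B φ true) a) =
        Monoid.PushoutI.of (φ := fφ A B φ) false ((fφ A B φ false) a)
      rw [Monoid.PushoutI.of_apply_eq_base (fφ A B φ) true a,
        Monoid.PushoutI.of_apply_eq_base (fφ A B φ) false a])
  have hρ : ∀ L : List (H ⊕ K), ρ (prodOf ιH ιK L) = prodOf (ofH A B φ) (ofK A B φ) L := by
    intro L
    induction L with
    | nil => simp
    | cons s L ih =>
      rw [prodOf_cons, prodOf_cons, map_mul, ih]
      congr 1
      cases s with
      | inl h => exact DFunLike.congr_fun hρH h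
      | inr k => exact DFunLike.congr_fun hρK k
  exact model_length h₁ h₂ (by rw [← hρ, ← hρ, hp])

end Model


section Main

variable {A : Subgroup H} {B : Subgroup K} {φ : A ≃* B} {ιH : H →* G} {ιK : K →* G}

/-- cyclically reduced of length at least two -/
def CR2 (A : Subgroup H) (B : Subgroup K) (L : List (H ⊕ K)) : Prop :=
  2 ≤ L.length ∧ SRed A B L ∧
    ∀ x y, L.head? = some x → L.getLast? = some y → x.isLeft ≠ y.isLeft

theorem key (hG : IsAmalgam A B φ ιH ιK) (hA : A ≤ Subgroup.center H)
    (hB : B ≤ Subgroup.center K) (Ly : List (H ⊕ K)) (hy : SRed A B Ly) :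
    ∀ Lg : List (H ⊕ K), SRed A B Lg →
      ∀ Lx, CR2 A B Lx → Lx.length = Ly.length →
        prodOf ιH ιK Lg * prodOf ιH ιK Lx * (prodOf ιH ιK Lg)⁻¹ = prodOf ιH ιK Ly →
        ∃ i, prodOf ιH ιK (Lx.rotate i) = prodOf ιH ιK Ly := by
  intro Lg
  induction Lg using List.reverseRecOn with
  | nil =>
    intro _ Lx _ _ heq
    exact ⟨0, by simpa using heq⟩
  | append_singleton Lg' s IH =>
    intro hSg Lx hcr hlen heq
    obtain ⟨hlen2, ⟨hch, hmem⟩, hends⟩ := hcr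
    have hxne : Lx ≠ [] := by rintro rfl; simp at hlen2
    obtain ⟨x₁, Xr, rfl⟩ := List.exists_cons_of_ne_nil hxne
    have hXr : Xr ≠ [] := by rintro rfl; simp at hlen2
    obtain ⟨Xi', xn, rfl⟩ : ∃ Xi' xn, Xr = Xi' ++ [xn] := by
      rcases List.eq_nil_or_concat Xr with h | ⟨Xi', xn, h⟩
      · exact absurd h hXr
      · exact ⟨Xi', xn, by simpa using h⟩
    have hgl : (x₁ :: (Xi' ++ [xn])).getLast? = some xn := by
      rw [show x₁ :: (Xi' ++ [xn]) = (x₁ :: Xi') ++ [xn] from rfl, List.getLast?_concat]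
    have htag : x₁.isLeft ≠ xn.isLeft := hends x₁ xn rfl hgl
    have hchx : List.Chain' (fun x y => x.isLeft ≠ y.isLeft) ((x₁ :: Xi') ++ [xn]) := hch
    obtain ⟨hch1, -, hbnd0⟩ := List.isChain_append.1 hchx
    have hbnd : ∀ z ∈ (x₁ :: Xi').getLast?, z.isLeft ≠ xn.isLeft :=
      fun z hz => hbnd0 z hz xn (Option.mem_def.2 rfl)
    obtain ⟨hchg, hmemg⟩ := hSg
    obtain ⟨hchg', -, hbg0⟩ := List.isChain_append.1 hchg
    have hSg' : SRed A B Lg' := ⟨hchg', fun z hz => hmemg z (by simp [hz])⟩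
    have hsmem : ¬ InAmalg A B s := hmemg s (by simp)
    have hbg : ∀ z ∈ Lg'.getLast?, z.isLeft ≠ s.isLeft :=
      fun z hz => hbg0 z hz s (Option.mem_def.2 rfl)
    rw [prodOf_append, prodOf_singleton] at heq
    have hcc : s.isLeft = x₁.isLeft ∨ s.isLeft = xn.isLeft := by
      cases hsl : s.isLeft <;> cases h1 : x₁.isLeft <;> cases h2 : xn.isLeft <;> simp_all
    rcases hcc with hc | hc
    · -- `s` is on the same side as the first syllable
      have hss : (sinv s).isLeft = (sprod s x₁).isLeft := by simp
      by_cases hau : InAmalg A B (sprod s x₁)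
      · -- rotation by one
        have hkey : syl ιH ιK s * prodOf ιH ιK (x₁ :: (Xi' ++ [xn])) * (syl ιH ιK s)⁻¹
            = prodOf ιH ιK ((Xi' ++ [xn]) ++ [x₁]) := by
          rw [prodOf_cons, prodOf_append (L₂ := [x₁]), prodOf_singleton]
          have hcomm := (commute_syl hG hA hB hau
            (prodOf ιH ιK (Xi' ++ [xn]) * (syl ιH ιK s)⁻¹)).eq
          have e1 : syl ιH ιK s * (syl ιH ιK x₁ * prodOf ιH ιK (Xi' ++ [xn])) *
              (syl ιH ιK s)⁻¹
              = syl ιH ιK (sprod s x₁) * (prodOf ιH ιK (Xi' ++ [xn]) * (syl ιH ιK s)⁻¹) := by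
            rw [syl_sprod ιH ιK hc]; group
          rw [e1, hcomm, mul_assoc, ← syl_sinv, ← syl_sprod ιH ιK hss, sprod_sinv_left hc]
        have hcr' : CR2 A B ((Xi' ++ [xn]) ++ [x₁]) := by
          refine ⟨by simp only [List.length_append, List.length_cons, List.length_nil]; omega,
            ⟨?_, ?_⟩, ?_⟩
          · simp only [List.Chain']
            rw [List.isChain_append]
            refine ⟨List.IsChain.tail hch, List.isChain_singleton _, ?_⟩
            intro z hz y hy
            rw [List.getLast?_concat] at hz
            simp only [List.head?_cons, Option.mem_def, Option.some.injEq] at hz hy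
            subst hz; subst hy
            exact fun hh => htag hh.symm
          · intro z hz
            apply hmem
            simp only [List.mem_append, List.mem_cons, List.mem_singleton] at hz ⊢
            tauto
          · intro a b ha hb
            rw [List.head?_append_of_ne_nil _ (by simp)] at ha
            rw [List.getLast?_concat] at hb
            simp only [Option.some.injEq] at hb
            subst hb
            have := (List.isChain_cons.1 hch).1 a (Option.mem_def.2 ha)
            exact fun hh => this hh.symm
        have hlen' : ((Xi' ++ [xn]) ++ [x₁]).length = Ly.length := by
          simp only [List.length_append, List.length_cons, List.length_nil] at hlen ⊢
          omega
        have heq2 : prodOf ιH ιK Lg' * prodOf ιH ιK ((Xi' ++ [xn]) ++ [x₁]) *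
            (prodOf ιH ιK Lg')⁻¹ = prodOf ιH ιK Ly := by
          rw [← hkey, ← heq]; group
        obtain ⟨i, hi⟩ := IH hSg' _ hcr' hlen' heq2
        refine ⟨1 + i, ?_⟩
        rw [← List.rotate_rotate,
          show (x₁ :: (Xi' ++ [xn])).rotate 1 = (Xi' ++ [xn]) ++ [x₁] by
            simpa using List.rotate_cons_succ (Xi' ++ [xn]) x₁ 0]
        exact hi
      · -- contradiction: the conjugate has a longer reduced form
        exfalso
        set W := Lg' ++ sprod s x₁ :: ((Xi' ++ [xn]) ++ invRev (Lg' ++ [s])) with hW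
        have hWprod : prodOf ιH ιK W = prodOf ιH ιK Ly := by
          rw [hW, ← heq]
          simp only [prodOf_append, prodOf_cons, prodOf_singleton, prodOf_invRev,
            prodOf_nil, syl_sprod ιH ιK hc]
          group
        have hWred : SRed A B W := by
          constructor
          · simp only [List.Chain']
            rw [hW, List.isChain_append]
            refine ⟨hchg', ?_, ?_⟩
            · rw [List.isChain_cons]
              constructor
              · intro y hy
                rw [List.head?_append_of_ne_nil _ (by simp)] at hy
                have h2 := (List.isChain_cons.1 hch).1 y hy
                simp only [isLeft_sprod]
                rw [hc]
                exact h2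
              · rw [List.isChain_append]
                refine ⟨List.IsChain.tail hch, (SRed.invRev ⟨hchg, hmemg⟩).1, ?_⟩
                intro z hz y hy
                rw [List.getLast?_concat] at hz
                rw [invRev_concat, List.head?_cons] at hy
                simp only [Option.mem_def, Option.some.injEq] at hz hy
                subst hz; subst hy
                simp only [isLeft_sinv]
                exact fun hh => htag (hc ▸ hh.symm)
            · intro z hz y hy
              simp only [List.head?_cons, Option.mem_def, Option.some.injEq] at hy
              subst hy
              simp only [isLeft_sprod]
              exact hbg z hz
          · intro z hz
            rw [hW] at hz
            simp only [List.mem_append, List.mem_cons] at hz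
            rcases hz with hz | hz | hz | hz
            · exact hmemg z (by simp [hz])
            · subst hz; exact hau
            · exact hmem z (by
                simp only [List.mem_cons, List.mem_append, List.mem_singleton] at hz ⊢
                tauto)
            · exact (SRed.invRev ⟨hchg, hmemg⟩).2 z hz
        have hle := length_eq hG hWred hy hWprod
        rw [hW] at hle
        simp only [List.length_append, List.length_cons, List.length_nil, invRev,
          List.length_reverse, List.length_map] at hle
        simp only [List.length_cons, List.length_append, List.length_nil] at hlen
        omega
    · -- `s` is on the same side as the last syllable
      have hurel : (sprod xn (sinv s)).isLeft = s.isLeft := by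
        simp only [isLeft_sprod]; exact hc.symm
      have hsylu : syl ιH ιK (sprod xn (sinv s)) = syl ιH ιK xn * (syl ιH ιK s)⁻¹ := by
        rw [syl_sprod ιH ιK (by simp [hc]), syl_sinv]
      have e0 : prodOf ιH ιK (x₁ :: (Xi' ++ [xn])) =
          prodOf ιH ιK (x₁ :: Xi') * syl ιH ιK xn := by
        rw [show x₁ :: (Xi' ++ [xn]) = (x₁ :: Xi') ++ [xn] from rfl,
          prodOf_append, prodOf_singleton]
      by_cases hau : InAmalg A B (sprod xn (sinv s))
      · -- rotation moving the last syllable to the front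
        have hkey : syl ιH ιK s * prodOf ιH ιK (x₁ :: (Xi' ++ [xn])) * (syl ιH ιK s)⁻¹
            = prodOf ιH ιK (xn :: (x₁ :: Xi')) := by
          rw [e0]
          have hcomm := (commute_syl hG hA hB hau
            (syl ιH ιK s * prodOf ιH ιK (x₁ :: Xi'))).eq
          calc syl ιH ιK s * (prodOf ιH ιK (x₁ :: Xi') * syl ιH ιK xn) * (syl ιH ιK s)⁻¹
              = (syl ιH ιK s * prodOf ιH ιK (x₁ :: Xi')) *
                  syl ιH ιK (sprod xn (sinv s)) := by rw [hsylu]; group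
            _ = syl ιH ιK (sprod xn (sinv s)) *
                  (syl ιH ιK s * prodOf ιH ιK (x₁ :: Xi')) := hcomm.symm
            _ = prodOf ιH ιK (xn :: (x₁ :: Xi')) := by
                simp only [prodOf_cons, hsylu]
                group
        have hcr' : CR2 A B (xn :: (x₁ :: Xi')) := by
          refine ⟨by simp only [List.length_cons]; omega, ⟨?_, ?_⟩, ?_⟩
          · simp only [List.Chain']
            rw [List.isChain_cons]
            refine ⟨?_, hch1⟩
            intro y hy
            simp only [List.head?_cons, Option.mem_def, Option.some.injEq] at hy
            subst hy
            exact fun hh => htag hh.symm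
          · intro z hz
            apply hmem
            simp only [List.mem_append, List.mem_cons, List.mem_singleton] at hz ⊢
            tauto
          · intro a b ha hb
            simp only [List.head?_cons, Option.some.injEq] at ha
            subst ha
            rw [show xn :: (x₁ :: Xi') = [xn] ++ (x₁ :: Xi') from rfl,
              List.getLast?_append_of_ne_nil _ (by simp)] at hb
            have := hbnd b (Option.mem_def.2 hb)
            exact fun hh => this (hh.symm)
        have hlen' : (xn :: (x₁ :: Xi')).length = Ly.length := by
          simp only [List.length_append, List.length_cons, List.length_nil] at hlen ⊢
          omega
        have heq2 : prodOf ιH ιK Lg' * prodOf ιH ιK (xn :: (x₁ :: Xi')) *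
            (prodOf ιH ιK Lg')⁻¹ = prodOf ιH ιK Ly := by
          rw [← hkey, ← heq]; group
        obtain ⟨i, hi⟩ := IH hSg' _ hcr' hlen' heq2
        refine ⟨(x₁ :: Xi').length + i, ?_⟩
        rw [← List.rotate_rotate,
          show (x₁ :: (Xi' ++ [xn])).rotate (x₁ :: Xi').length = xn :: (x₁ :: Xi') by
            rw [show x₁ :: (Xi' ++ [xn]) = (x₁ :: Xi') ++ [xn] from rfl,
              List.rotate_eq_drop_append_take
                (by simp only [List.length_cons, List.length_append, List.length_nil]; omega),
              List.drop_left, List.take_left]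
            rfl]
        exact hi
      · -- contradiction: the conjugate has a longer reduced form
        exfalso
        set W := Lg' ++ s :: ((x₁ :: Xi') ++ sprod xn (sinv s) :: invRev Lg') with hW
        have hWprod : prodOf ιH ιK W = prodOf ιH ιK Ly := by
          rw [hW, ← heq]
          simp only [prodOf_append, prodOf_cons, prodOf_singleton, prodOf_invRev,
            prodOf_nil, hsylu]
          group
        have hWred : SRed A B W := by
          constructor
          · simp only [List.Chain']
            rw [hW, List.isChain_append]
            refine ⟨hchg', ?_, ?_⟩
            · rw [List.isChain_cons]
              constructor
              · intro y hy
                rw [List.head?_append_of_ne_nil _ (by simp), List.head?_cons] at hy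
                simp only [Option.mem_def, Option.some.injEq] at hy
                subst hy
                exact fun hh => htag (hh.symm.trans hc)
              · rw [List.isChain_append]
                refine ⟨hch1, ?_, ?_⟩
                · rw [List.isChain_cons]
                  refine ⟨?_, (SRed.invRev hSg').1⟩
                  intro y hy
                  rw [head?_invRev] at hy
                  simp only [Option.mem_def, Option.map_eq_some_iff] at hy
                  obtain ⟨z, hz, rfl⟩ := hy
                  simp only [isLeft_sprod, isLeft_sinv]
                  exact fun hh => hbg z (Option.mem_def.2 hz) (hh.symm.trans hc.symm)
                · intro z hz y hy
                  simp only [List.head?_cons, Option.mem_def, Option.some.injEq] at hy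
                  subst hy
                  simp only [isLeft_sprod]
                  exact hbnd z hz
            · intro z hz y hy
              simp only [List.head?_cons, Option.mem_def, Option.some.injEq] at hy
              subst hy
              exact hbg z hz
          · intro z hz
            rw [hW] at hz
            simp only [List.mem_append, List.mem_cons] at hz
            rcases hz with hz | hz | hz | hz | hz
            · exact hmemg z (by simp [hz])
            · subst hz; exact hsmem
            · exact hmem z (by
                simp only [List.mem_cons, List.mem_append, List.mem_singleton] at hz ⊢
                tauto)
            · subst hz; exact hau
            · exact (SRed.invRev hSg').2 z hz
        have hle := length_eq hG hWred hy hWprod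
        rw [hW] at hle
        simp only [List.length_append, List.length_cons, List.length_nil, invRev,
          List.length_reverse, List.length_map] at hle
        simp only [List.length_cons, List.length_append, List.length_nil] at hlen
        omega

end Main

end AmalgamConj


/-- Conjugacy criterion in an amalgam over central subgroups: two cyclically reduced
elements of equal length `> 1` are conjugate iff one is a cyclic permutation of the
other. -/
theorem isConj_iff_cyclic_permutation {H K G : Type} [Group H] [Group K] [Group G]
    (A : Subgroup H) (B : Subgroup K) (φ : A ≃* B)
    (hA : A ≤ Subgroup.center H) (hB : B ≤ Subgroup.center K)
    (ιH : H →* G) (ιK : K →* G) (hG : IsAmalgam A B φ ιH ιK)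
    (Lx Ly : List (H ⊕ K))
    (hx : CyclicallyReduced A B Lx) (hy : CyclicallyReduced A B Ly)
    (hlen1 : 1 < Lx.length) (hlen : Lx.length = Ly.length) :
    IsConj (prodOf ιH ιK Lx) (prodOf ιH ιK Ly) ↔
      ∃ i : ℕ, prodOf ιH ιK (Lx.rotate i) = prodOf ιH ιK Ly := by
  have hlen1y : 1 < Ly.length := hlen ▸ hlen1
  constructor
  · intro hconj
    obtain ⟨c, hc⟩ := isConj_iff.1 hconj
    have srx : AmalgamConj.SRed A B Lx := by
      refine ⟨hx.1.2.1, ?_⟩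
      intro s hs
      have h2 := hx.1.2.2 hlen1 s hs
      cases s with
      | inl h => exact fun hm => h2.1 h rfl hm
      | inr k => exact fun hm => h2.2 k rfl hm
    have sry : AmalgamConj.SRed A B Ly := by
      refine ⟨hy.1.2.1, ?_⟩
      intro s hs
      have h2 := hy.1.2.2 hlen1y s hs
      cases s with
      | inl h => exact fun hm => h2.1 h rfl hm
      | inr k => exact fun hm => h2.2 k rfl hm
    have hcr : AmalgamConj.CR2 A B Lx := by
      refine ⟨by omega, srx, ?_⟩
      obtain ⟨x0, y0, hh, hl, hne⟩ := hx.2 hlen1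
      intro a b ha hb
      rw [hh, Option.some.injEq] at ha
      rw [hl, Option.some.injEq] at hb
      rw [← ha, ← hb]
      exact hne
    rcases AmalgamConj.decomp hG c with ⟨u, hu, rfl⟩ | ⟨Lg, hne, hsr, rfl⟩
    · refine ⟨0, ?_⟩
      rw [List.rotate_zero, ← hc,
        (AmalgamConj.commute_syl hG hA hB hu (prodOf ιH ιK Lx)).eq,
        mul_inv_cancel_right]
    · exact AmalgamConj.key hG hA hB Ly sry Lg hsr Lx hcr hlen hc
  · rintro ⟨i, hi⟩
    have h1 : IsConj (prodOf ιH ιK Lx) (prodOf ιH ιK (Lx.rotate i)) := by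
      rw [← List.rotate_mod]
      have hj : i % Lx.length ≤ Lx.length := le_of_lt (Nat.mod_lt _ (by omega))
      rw [List.rotate_eq_drop_append_take hj]
      have hsplit : prodOf ιH ιK Lx = prodOf ιH ιK (Lx.take (i % Lx.length)) *
          prodOf ιH ιK (Lx.drop (i % Lx.length)) := by
        rw [← AmalgamConj.prodOf_append, List.take_append_drop]
      rw [AmalgamConj.prodOf_append, hsplit, isConj_iff]
      exact ⟨(prodOf ιH ιK (Lx.take (i % Lx.length)))⁻¹, by group⟩
    rw [hi] at h1
    exact h1
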